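/- Work in ℚ(t) and let p_k = ((−t)^k − (−t)^{−k}) / ((−t) − (−t)^{−1}) for k ≥ 1. Let σ : ℚ(t) → ℚ(t) be the field automorphism determined by σ(t) = t^{−1}. Define z : {1,2,…} → ℚ(t) recursively by z_1 = 1 and z_{d+1} = Σ_{k≥1} ((2d)!/k!) Σ_{a_1+…+a_k = d, a_i > 0} Π_{i=1}^{k} ( p_{a_i}² · z_{a_i} / (2a_i)! ) for d ≥ 1. Then σ(z_d) = z_d for all d ≥ 1; that is, each z_d is invariant under the substitution t ↦ t^{−1} (equivalently q ↦ q^{−1} for q = t²). -/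
import Mathlib


open Finset

/-- `p k = ((−t)^k − (−t)^{−k}) / ((−t) − (−t)^{−1})` in `ℚ(t)`, the shifted Poincaré
polynomial of `ℙ^{k−1}` at `q = t²`. -/
noncomputable def shiftedP (k : ℕ) : RatFunc ℚ :=
  ((-RatFunc.X) ^ (k : ℤ) - (-RatFunc.X) ^ (-(k : ℤ)))
    / ((-RatFunc.X) - (-RatFunc.X)⁻¹)

lemma sigma_shiftedP (σ : RatFunc ℚ ≃+* RatFunc ℚ)
    (hσ : σ RatFunc.X = (RatFunc.X)⁻¹) (k : ℕ) :
    σ (shiftedP k) = shiftedP k := by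
  have hnegX : σ (-RatFunc.X) = (-RatFunc.X)⁻¹ := by
    rw [map_neg, hσ, inv_neg]
  simp only [shiftedP, map_div₀, map_sub, map_zpow₀, map_inv₀, hnegX, inv_inv,
    inv_zpow]
  rw [← zpow_neg, ← zpow_neg, neg_neg,
    ← neg_sub ((-RatFunc.X) ^ (k : ℤ)), ← neg_sub (-RatFunc.X), neg_div_neg_eq]

/-- Let `σ` be the field automorphism of `ℚ(t)` with `σ(t) = t⁻¹`, and let `z` be
defined recursively by `z 1 = 1` and
`z_{d+1} = Σ_{k≥1} ((2d)!/k!) Σ_{a_1+…+a_k=d, a_i>0} Π_i p_{a_i}²·z_{a_i}/(2a_i)!`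
for `d ≥ 1`. Then `σ(z_d) = z_d` for all `d ≥ 1`, i.e. each `z_d` is invariant under
`t ↦ t⁻¹`. -/
theorem z_invariant_under_q_inverse (σ : RatFunc ℚ ≃+* RatFunc ℚ)
    (hσ : σ RatFunc.X = (RatFunc.X)⁻¹)
    (z : ℕ → RatFunc ℚ) (hz1 : z 1 = 1)
    (hrec : ∀ d : ℕ, 1 ≤ d →
      z (d + 1) = ∑ k ∈ Finset.Icc 1 d,
        ((Nat.factorial (2 * d) : RatFunc ℚ) / (Nat.factorial k : RatFunc ℚ)) *
          ∑ c ∈ (Finset.Nat.antidiagonalTuple k d).filter (fun c => ∀ i, 0 < c i),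
            ∏ i, (shiftedP (c i)) ^ 2 * z (c i) / (Nat.factorial (2 * c i) : RatFunc ℚ)) :
    ∀ d : ℕ, 1 ≤ d → σ (z d) = z d := by
  intro d
  induction d using Nat.strong_induction_on with
  | _ d ih =>
    intro hd
    match d, hd with
    | 1, _ => rw [hz1, map_one]
    | (e + 2), _ =>
      have he : 1 ≤ e + 1 := Nat.le_add_left 1 e
      rw [show e + 2 = (e + 1) + 1 from rfl, hrec (e + 1) he]
      rw [map_sum]
      refine Finset.sum_congr rfl fun k hk => ?_
      rw [map_mul, map_div₀, map_natCast, map_natCast, map_sum]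
      congr 1
      refine Finset.sum_congr rfl fun c hc => ?_
      rw [Finset.mem_filter, Finset.Nat.mem_antidiagonalTuple] at hc
      obtain ⟨hsum, hpos⟩ := hc
      rw [map_prod]
      refine Finset.prod_congr rfl fun i _ => ?_
      have hle : c i ≤ e + 1 := hsum ▸ Finset.single_le_sum
        (f := c) (fun j _ => Nat.zero_le _) (Finset.mem_univ i)
      have := ih (c i) (by omega) (hpos i)
      rw [map_div₀, map_mul, map_pow, map_natCast, sigma_shiftedP σ hσ, this]
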